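/- For every integer b ≥ 5 and every x ∈ (0, 1/2], x·ln(1 − 2/b + 1/x) ≤ (1/2)·ln(3 − 2/b); moreover the function x ↦ x·ln(1 − 2/b + 1/x) is increasing on (0, 1/2]. -/
import Mathlib


/-- For every integer `b ≥ 5` and every `x ∈ (0, 1/2]`,
`x · ln(1 - 2/b + 1/x) ≤ (1/2) · ln(3 - 2/b)`; moreover `x ↦ x · ln(1 - 2/b + 1/x)` is
increasing on `(0, 1/2]`. -/
theorem stmt12 (b : ℕ) (hb : 5 ≤ b) :
    (∀ x ∈ Set.Ioc (0 : ℝ) (1/2),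
      x * Real.log (1 - 2/(b : ℝ) + 1/x) ≤ (1/2) * Real.log (3 - 2/(b : ℝ))) ∧
    StrictMonoOn (fun x : ℝ => x * Real.log (1 - 2/(b : ℝ) + 1/x))
      (Set.Ioc (0 : ℝ) (1/2)) := by
  have hb5 : (5:ℝ) ≤ (b:ℝ) := by exact_mod_cast hb
  have hb0 : (0:ℝ) < (b:ℝ) := by linarith
  set a : ℝ := 1 - 2/(b:ℝ) with ha
  have h2b : 2/(b:ℝ) ≤ 2/5 := by
    rw [div_le_div_iff₀ hb0 (by norm_num)]; linarith
  have h2b0 : 0 ≤ 2/(b:ℝ) := by positivity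
  have ha1 : 3/5 ≤ a := by rw [ha]; linarith
  have ha2 : a ≤ 1 := by rw [ha]; linarith
  -- numeric log bound : 10/13 < log(13/5)
  have hlog : (10:ℝ)/13 < Real.log (13/5) := by
    rw [Real.lt_log_iff_exp_lt (by norm_num)]
    have hE : (0:ℝ) < Real.exp (10/39) := Real.exp_pos _
    have h1 : (29:ℝ)/39 ≤ (Real.exp (10/39))⁻¹ := by
      have h := Real.add_one_le_exp (-(10/39) : ℝ)
      rw [Real.exp_neg] at h
      linarith
    have h2 : Real.exp (10/39) ≤ 39/29 := by
      have h3 : Real.exp (10/39) * (29/39) ≤ 1 := by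
        calc Real.exp (10/39) * (29/39)
            ≤ Real.exp (10/39) * (Real.exp (10/39))⁻¹ := by
              exact mul_le_mul_of_nonneg_left h1 hE.le
          _ = 1 := mul_inv_cancel₀ hE.ne'
      nlinarith
    calc Real.exp (10/13) = Real.exp (10/39) ^ (3:ℕ) := by
          rw [← Real.exp_nat_mul]; norm_num
      _ ≤ (39/29) ^ (3:ℕ) := by
          exact pow_le_pow_left₀ hE.le h2 3
      _ < 13/5 := by norm_num
  -- derivative
  have hderiv : ∀ x ∈ Set.Ioc (0:ℝ) (1/2),
      HasDerivAt (fun x : ℝ => x * Real.log (a + 1/x))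
        (Real.log (a + 1/x) - (1/x)/(a + 1/x)) x ∧
      (13/5 : ℝ) ≤ a + 1/x := by
    rintro x ⟨hx0, hx2⟩
    have hxne : x ≠ 0 := ne_of_gt hx0
    have hinv2 : (2:ℝ) ≤ 1/x := by
      rw [le_div_iff₀ hx0]; linarith
    have hy : (13/5:ℝ) ≤ a + 1/x := by linarith
    have hy0 : (0:ℝ) < a + 1/x := by linarith
    have h1 : HasDerivAt (fun x : ℝ => a + 1/x) (-(x^2)⁻¹) x := by
      simpa [one_div] using ((hasDerivAt_inv hxne).const_add a)
    have h2 : HasDerivAt (fun x : ℝ => Real.log (a + 1/x)) (-(x^2)⁻¹ / (a + 1/x)) x :=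
      h1.log (ne_of_gt hy0)
    have h3 : HasDerivAt (fun x : ℝ => x * Real.log (a + 1/x))
        (1 * Real.log (a + 1/x) + x * (-(x^2)⁻¹ / (a + 1/x))) x :=
      (hasDerivAt_id x).mul h2
    refine ⟨?_, hy⟩
    convert h3 using 1
    field_simp
    ring
  -- positivity of the derivative
  have hpos : ∀ x ∈ Set.Ioc (0:ℝ) (1/2),
      0 < Real.log (a + 1/x) - (1/x)/(a + 1/x) := by
    rintro x ⟨hx0, hx2⟩
    have hxne : x ≠ 0 := ne_of_gt hx0
    have hinv2 : (2:ℝ) ≤ 1/x := by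
      rw [le_div_iff₀ hx0]; linarith
    have hy : (13/5:ℝ) ≤ a + 1/x := by linarith
    have hy0 : (0:ℝ) < a + 1/x := by linarith
    have hlogy : Real.log (13/5) + 1 - (13/5)/(a+1/x) ≤ Real.log (a+1/x) := by
      have h := Real.log_le_sub_one_of_pos (show (0:ℝ) < (13/5)/(a+1/x) by positivity)
      rw [Real.log_div (by norm_num) (ne_of_gt hy0)] at h
      linarith
    have hfrac : (13/5 - a)/(a+1/x) ≤ 10/13 := by
      rw [div_le_iff₀ hy0]; nlinarith
    have hid : (1/x)/(a+1/x) + (13/5)/(a+1/x) = 1 + (13/5 - a)/(a+1/x) := by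
      field_simp
      ring
    linarith
  -- strict monotonicity
  have hmono : StrictMonoOn (fun x : ℝ => x * Real.log (a + 1/x))
      (Set.Ioc (0:ℝ) (1/2)) := by
    apply strictMonoOn_of_deriv_pos (convex_Ioc _ _)
    · intro x hx
      exact ((hderiv x hx).1).continuousAt.continuousWithinAt
    · intro x hx
      rw [interior_Ioc] at hx
      have hx' : x ∈ Set.Ioc (0:ℝ) (1/2) := ⟨hx.1, le_of_lt hx.2⟩
      rw [(hderiv x hx').1.deriv]
      exact hpos x hx'
  refine ⟨?_, hmono⟩
  intro x hx
  have h12 : (1/2:ℝ) ∈ Set.Ioc (0:ℝ) (1/2) := by norm_num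
  have hkey : (1/2:ℝ) * Real.log (a + 1/(1/2:ℝ)) = 1/2 * Real.log (3 - 2/(b:ℝ)) := by
    rw [show a + 1/(1/2:ℝ) = 3 - 2/(b:ℝ) from by rw [ha]; ring]
  rcases eq_or_lt_of_le hx.2 with heq | hlt
  · rw [heq]; exact le_of_eq hkey
  · have h := hmono hx h12 hlt
    simp only at h
    linarith
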